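/- For integers N ≥ 1 and N−1 ≥ a ≥ b ≥ 0, the quantity binom(2N−2−a−b, N−1−b)·(a−b+1)/(N−b) is an integer (it is the Plücker degree of the Schubert cycle Σ_{a,b} in G(1,N)). -/
import Mathlib

lemma ballot_dvd (m k : ℕ) (hk : k ≤ m) :
    (m + 1) ∣ Nat.choose (2 * m - k) m * (k + 1) := by
  set n := 2 * m - k with hn
  set c := n.choose m with hc
  set d := n.choose (m + 1) with hd
  have h1 : d * (m + 1) = c * (n - m) := Nat.choose_succ_right_eq n m
  have hnm : n - m = m - k := by omega
  rw [hnm] at h1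
  have h2 : d ≤ c := by
    by_contra h
    push_neg at h
    have : d * (m + 1) < d * (m + 1) := by
      calc d * (m + 1) = c * (m - k) := h1
        _ ≤ c * (m + 1) := Nat.mul_le_mul_left _ (by omega)
        _ < d * (m + 1) := by
            exact (Nat.mul_lt_mul_right (Nat.succ_pos m)).mpr h
    omega
  refine ⟨c - d, ?_⟩
  have h3 : (m + 1) * (c - d) = (m + 1) * c - (m + 1) * d := Nat.mul_sub _ _ _
  have h4 : (m + 1) * d = c * (m - k) := by rw [mul_comm]; exact h1
  have h5 : c * (m - k) ≤ (m + 1) * c := by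
    rw [mul_comm (m+1) c]; exact Nat.mul_le_mul_left _ (by omega)
  rw [h3, h4]
  have : (m + 1) * c = c * (k + 1) + c * (m - k) := by
    rw [mul_comm (m+1) c, ← Nat.mul_add]
    congr 1
    omega
  omega

/-- For integers N ≥ 1 and N−1 ≥ a ≥ b ≥ 0, the quantity
binom(2N−2−a−b, N−1−b)·(a−b+1)/(N−b) is an integer, i.e. (N−b) divides
binom(2N−2−a−b, N−1−b)·(a−b+1). -/
theorem plucker_degree_is_integer (N a b : ℕ) (hN : 1 ≤ N) (hba : b ≤ a)
    (haN : a ≤ N - 1) :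
    (N - b) ∣ Nat.choose (2 * N - 2 - a - b) (N - 1 - b) * (a - b + 1) := by
  have h := ballot_dvd (N - 1 - b) (a - b) (by omega)
  have e1 : 2 * (N - 1 - b) - (a - b) = 2 * N - 2 - a - b := by omega
  have e2 : N - 1 - b + 1 = N - b := by omega
  rw [e1, e2] at h
  exact h
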